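/- Let p be an odd prime, F an algebraically closed field of characteristic p, and l ≥ 4. Let Z := {I, −I}, a central subgroup of SO_J, let H := SO_J/Z with quotient map π, and set T := π(T̄) and W̌ := π(W̄). Then: (1) N_H(T) is the internal semidirect product of T by W̌ (i.e. W̌ ⊆ N_H(T), T ∩ W̌ = {1}, and N_H(T) = T·W̌); (2) the endomorphism of H induced by the entrywise Frobenius map x ↦ (x_{ij}^p) (which preserves SO_J and Z) fixes every element of W̌; (3) conjugation by π(c), where c := P_τ for τ the transposition exchanging l and l+1 (note c ∈ O_J), induces an automorphism of H that maps W̌ onto W̌. -/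

import Mathlib

open Matrix

noncomputable section

variable (n : ℕ) (F : Type) [Field F]

/-- The antidiagonal matrix `J`: entry `(i,j)` (1-based) is `1` iff `i + j = n + 1`. -/
def Jmat : Matrix (Fin n) (Fin n) F :=
  Matrix.of fun i j => if (i : ℕ) + (j : ℕ) + 1 = n then 1 else 0

/-- The permutation `ι` of `{1,…,n}` given (1-based) by `i ↦ n + 1 - i`. -/
def iotaPerm : Equiv.Perm (Fin n) where
  toFun i := ⟨n - 1 - (i : ℕ), by have := i.isLt; omega⟩
  invFun i := ⟨n - 1 - (i : ℕ), by have := i.isLt; omega⟩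
  left_inv i := by have := i.isLt; apply Fin.ext; show n - 1 - (n - 1 - (i : ℕ)) = _; omega
  right_inv i := by have := i.isLt; apply Fin.ext; show n - 1 - (n - 1 - (i : ℕ)) = _; omega

/-- The permutation matrix `P_σ`, with `(i,j)` entry `1` iff `i = σ j`. -/
def permMat (σ : Equiv.Perm (Fin n)) : Matrix (Fin n) (Fin n) F :=
  Matrix.of fun i j => if i = σ j then 1 else 0

lemma permMat_mul (σ τ : Equiv.Perm (Fin n)) :
    permMat n F σ * permMat n F τ = permMat n F (σ * τ) := by
  ext i j
  simp only [permMat, Matrix.mul_apply, Matrix.of_apply]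
  rw [Finset.sum_eq_single (τ j)]
  · simp [Equiv.Perm.mul_apply]; congr
  · intro k _ hk; simp [hk]
  · intro h; simp at h

lemma permMat_one : permMat n F 1 = 1 := by
  ext i j
  simp [permMat, Matrix.one_apply]; congr

/-- The permutation matrix `P_σ` as an element of `GL_n(F)`. -/
def permGL (σ : Equiv.Perm (Fin n)) : GL (Fin n) F :=
  ⟨permMat n F σ, permMat n F σ⁻¹,
    by rw [permMat_mul]; simp [permMat_one],
    by rw [permMat_mul]; simp [permMat_one]⟩

/-- The orthogonal group `O_J = {x ∈ GL_n(F) : xᵀ J x = J}` as a subgroup of `GL_n(F)`. -/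
def OJ : Subgroup (GL (Fin n) F) where
  carrier := {x | (x : Matrix (Fin n) (Fin n) F)ᵀ * Jmat n F * (x : Matrix (Fin n) (Fin n) F) = Jmat n F}
  one_mem' := by simp
  mul_mem' := by
    intro a b ha hb
    simp only [Set.mem_setOf_eq] at ha hb ⊢
    rw [Units.val_mul, transpose_mul]
    calc (b : Matrix (Fin n) (Fin n) F)ᵀ * (a : Matrix (Fin n) (Fin n) F)ᵀ * Jmat n F *
          ((a : Matrix (Fin n) (Fin n) F) * (b : Matrix (Fin n) (Fin n) F))
        = (b : Matrix (Fin n) (Fin n) F)ᵀ *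
            ((a : Matrix (Fin n) (Fin n) F)ᵀ * Jmat n F * (a : Matrix (Fin n) (Fin n) F)) *
            (b : Matrix (Fin n) (Fin n) F) := by noncomm_ring
      _ = Jmat n F := by rw [ha, hb]
  inv_mem' := by
    intro a ha
    simp only [Set.mem_setOf_eq] at ha ⊢
    calc ((a⁻¹ : GL (Fin n) F) : Matrix (Fin n) (Fin n) F)ᵀ * Jmat n F *
          ((a⁻¹ : GL (Fin n) F) : Matrix (Fin n) (Fin n) F)
        = ((a⁻¹ : GL (Fin n) F) : Matrix (Fin n) (Fin n) F)ᵀ *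
            ((a : Matrix (Fin n) (Fin n) F)ᵀ * Jmat n F * (a : Matrix (Fin n) (Fin n) F)) *
            ((a⁻¹ : GL (Fin n) F) : Matrix (Fin n) (Fin n) F) := by rw [ha]
      _ = ((a : Matrix (Fin n) (Fin n) F) * ((a⁻¹ : GL (Fin n) F) : Matrix (Fin n) (Fin n) F))ᵀ *
            Jmat n F *
            ((a : Matrix (Fin n) (Fin n) F) * ((a⁻¹ : GL (Fin n) F) : Matrix (Fin n) (Fin n) F)) := by
          rw [transpose_mul]; noncomm_ring
      _ = Jmat n F := by rw [Units.mul_inv]; simp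

/-- `SL_n(F)` viewed as a subgroup of `GL_n(F)`. -/
def SLgl : Subgroup (GL (Fin n) F) where
  carrier := {x | (x : Matrix (Fin n) (Fin n) F).det = 1}
  one_mem' := by simp
  mul_mem' := by
    intro a b ha hb
    simp only [Set.mem_setOf_eq] at ha hb ⊢
    rw [Units.val_mul, det_mul, ha, hb, one_mul]
  inv_mem' := by
    intro a ha
    simp only [Set.mem_setOf_eq] at ha ⊢
    have h : ((a : Matrix (Fin n) (Fin n) F) * ((a⁻¹ : GL (Fin n) F) : Matrix (Fin n) (Fin n) F)).det = 1 := by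
      rw [Units.mul_inv]; simp
    rw [det_mul, ha, one_mul] at h
    exact h

/-- `SO_J := O_J ∩ SL_n(F)`. -/
def SOJ : Subgroup (GL (Fin n) F) := OJ n F ⊓ SLgl n F

/-- The diagonal matrices lying in a subgroup `G` of `GL_n(F)` form a subgroup. -/
def diagIn (G : Subgroup (GL (Fin n) F)) : Subgroup (GL (Fin n) F) where
  carrier := {x | x ∈ G ∧ (x : Matrix (Fin n) (Fin n) F).IsDiag}
  one_mem' := ⟨one_mem _, Matrix.isDiag_one⟩
  mul_mem' := by
    rintro a b ⟨haG, haD⟩ ⟨hbG, hbD⟩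
    refine ⟨mul_mem haG hbG, ?_⟩
    rw [Units.val_mul, ← haD.diagonal_diag, ← hbD.diagonal_diag, diagonal_mul_diagonal]
    exact isDiag_diagonal _
  inv_mem' := by
    rintro a ⟨haG, haD⟩
    refine ⟨inv_mem haG, ?_⟩
    rw [Matrix.coe_units_inv, ← haD.diagonal_diag, inv_diagonal]
    exact isDiag_diagonal _

/-- `T̄`, the subgroup of all diagonal matrices contained in `O_J`. -/
def Tbar : Subgroup (GL (Fin n) F) := diagIn n F (OJ n F)

/-- `V̄ = {P_σ : σ ∘ ι = ι ∘ σ}` as a subgroup of `GL_n(F)`. -/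
def Vbar : Subgroup (GL (Fin n) F) where
  carrier := {x | ∃ σ : Equiv.Perm (Fin n),
      σ * iotaPerm n = iotaPerm n * σ ∧ (x : Matrix (Fin n) (Fin n) F) = permMat n F σ}
  one_mem' := ⟨1, by simp, by simp [permMat_one]⟩
  mul_mem' := by
    rintro a b ⟨σ, hσ, ha⟩ ⟨τ, hτ, hb⟩
    refine ⟨σ * τ, ?_, ?_⟩
    · rw [mul_assoc, hτ, ← mul_assoc, hσ, mul_assoc]
    · rw [Units.val_mul, ha, hb, permMat_mul]
  inv_mem' := by
    rintro a ⟨σ, hσ, ha⟩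
    have hau : a = permGL n F σ := Units.ext ha
    exact ⟨σ⁻¹, (Commute.inv_left hσ : _), by rw [hau]; rfl⟩

/-- `W̄ := V̄ ∩ SL_n(F)`. -/
def Wbar : Subgroup (GL (Fin n) F) := Vbar n F ⊓ SLgl n F

end

noncomputable section

variable (n : ℕ) (F : Type) [Field F]

/-- The central subgroup `Z = {I, −I}` of `SO_J`. -/
def Zpm : Subgroup ↥(SOJ n F) where
  carrier := {x | (x : GL (Fin n) F) = 1 ∨ (x : GL (Fin n) F) = -1}
  one_mem' := Or.inl rfl
  mul_mem' := by
    rintro a b (ha | ha) (hb | hb)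
    · left; rw [Subgroup.coe_mul, ha, hb, one_mul]
    · right; rw [Subgroup.coe_mul, ha, hb, one_mul]
    · right; rw [Subgroup.coe_mul, ha, hb, mul_one]
    · left; rw [Subgroup.coe_mul, ha, hb, neg_mul_neg, one_mul]
  inv_mem' := by
    rintro a (ha | ha)
    · left
      have h1 : ((a⁻¹ : ↥(SOJ n F)) : GL (Fin n) F) = (a : GL (Fin n) F)⁻¹ := rfl
      rw [h1, ha, inv_one]
    · right
      have h1 : ((a⁻¹ : ↥(SOJ n F)) : GL (Fin n) F) = (a : GL (Fin n) F)⁻¹ := rfl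
      rw [h1, ha, inv_neg_one]

instance Zpm_normal : (Zpm n F).Normal := by
  constructor
  rintro x (hx | hx) g
  · left; simp [hx]
  · right; simp [hx, mul_neg, neg_mul]

/-- The adjoint group `H := SO_J / {±I}`. -/
def Had : Type := ↥(SOJ n F) ⧸ Zpm n F

instance : Group (Had n F) := inferInstanceAs (Group (↥(SOJ n F) ⧸ Zpm n F))

/-- The quotient map `π : SO_J → H`. -/
def piAd : ↥(SOJ n F) →* Had n F := QuotientGroup.mk' (Zpm n F)

/-- `T := π(T̄)`. -/
def Tad : Subgroup (Had n F) := ((Tbar n F).subgroupOf (SOJ n F)).map (piAd n F)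

/-- `W̌ := π(W̄)`. -/
def Wad : Subgroup (Had n F) := ((Wbar n F).subgroupOf (SOJ n F)).map (piAd n F)

/-- The entrywise Frobenius endomorphism `x ↦ (x_{ij}^p)` of `GL_n(F)`. -/
def frobGL (p : ℕ) [Fact p.Prime] [CharP F p] : GL (Fin n) F →* GL (Fin n) F :=
  Units.map ((frobenius F p).mapMatrix (m := Fin n)).toMonoidHom

end

noncomputable section AuxLemmas

open Matrix

variable (n : ℕ) (F : Type) [Field F]

lemma iota_coe (i : Fin n) : ((iotaPerm n i : Fin n) : ℕ) = n - 1 - (i : ℕ) := rfl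

lemma eq_iota_iff {n : ℕ} {i j : Fin n} : (i : ℕ) + (j : ℕ) + 1 = n ↔ j = iotaPerm n i := by
  have hi := i.isLt; have hj := j.isLt
  constructor
  · intro h; apply Fin.ext; rw [iota_coe]; omega
  · rintro rfl; rw [iota_coe]; omega

lemma Jmat_apply (i j : Fin n) :
    Jmat n F i j = if (i : ℕ) + (j : ℕ) + 1 = n then 1 else 0 := rfl

lemma Jmat_iota (i : Fin n) : Jmat n F i (iotaPerm n i) = 1 := by
  rw [Jmat_apply, if_pos (eq_iota_iff.mpr rfl)]

lemma iota_ne_self {n l : ℕ} (hn : n = 2 * l) (i : Fin n) : iotaPerm n i ≠ i := by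
  intro h
  have := congrArg (fun x : Fin n => (x : ℕ)) h
  simp only [iota_coe] at this
  have := i.isLt; omega

lemma iota_iota {n : ℕ} (i : Fin n) : iotaPerm n (iotaPerm n i) = i := by
  apply Fin.ext; rw [iota_coe, iota_coe]; have := i.isLt; omega

lemma permMat_apply (σ : Equiv.Perm (Fin n)) (i j : Fin n) :
    permMat n F σ i j = if i = σ j then 1 else 0 := rfl

lemma permMat_transpose (σ : Equiv.Perm (Fin n)) :
    (permMat n F σ)ᵀ = permMat n F σ⁻¹ := by
  ext i j
  simp only [transpose_apply, permMat_apply]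
  congr 1
  simp only [eq_iff_iff]
  constructor
  · rintro rfl; simp
  · rintro rfl; simp

lemma mul_permMat_apply (M : Matrix (Fin n) (Fin n) F) (σ : Equiv.Perm (Fin n)) (i j : Fin n) :
    (M * permMat n F σ) i j = M i (σ j) := by
  rw [Matrix.mul_apply, Finset.sum_eq_single (σ j)]
  · rw [permMat_apply, if_pos rfl, mul_one]
  · intro k _ hk; rw [permMat_apply, if_neg hk, mul_zero]
  · intro h; simp at h

lemma permMat_mul_apply (M : Matrix (Fin n) (Fin n) F) (σ : Equiv.Perm (Fin n)) (i j : Fin n) :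
    (permMat n F σ * M) i j = M (σ⁻¹ i) j := by
  rw [Matrix.mul_apply, Finset.sum_eq_single (σ⁻¹ i)]
  · rw [permMat_apply, if_pos (by simp), one_mul]
  · intro k _ hk
    rw [permMat_apply, if_neg (fun h => hk (by rw [h]; simp)), zero_mul]
  · intro h; simp at h

lemma conj_perm_apply (M : Matrix (Fin n) (Fin n) F) (σ : Equiv.Perm (Fin n)) (i j : Fin n) :
    (permMat n F σ⁻¹ * M * permMat n F σ) i j = M (σ i) (σ j) := by
  rw [mul_permMat_apply, permMat_mul_apply, inv_inv]

lemma permMat_mul_diagonal (σ : Equiv.Perm (Fin n)) (d : Fin n → F) :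
    permMat n F σ * diagonal d = diagonal (fun i => d (σ⁻¹ i)) * permMat n F σ := by
  ext i j
  rw [permMat_mul_apply, Matrix.diagonal_mul, permMat_apply, Matrix.diagonal_apply]
  by_cases h : i = σ j
  · rw [if_pos (show σ⁻¹ i = j by rw [h]; simp), if_pos h, mul_one]
  · rw [if_neg (fun hh => h (by rw [← hh]; simp)), if_neg h, mul_zero]

lemma permGL_coe (σ : Equiv.Perm (Fin n)) :
    ((permGL n F σ : GL (Fin n) F) : Matrix (Fin n) (Fin n) F) = permMat n F σ := rfl

lemma permGL_inv_coe (σ : Equiv.Perm (Fin n)) :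
    (((permGL n F σ)⁻¹ : GL (Fin n) F) : Matrix (Fin n) (Fin n) F) = permMat n F σ⁻¹ := rfl

/-- membership of a permutation matrix in `O_J` when `σ` commutes with `ι`. -/
lemma permGL_mem_OJ {σ : Equiv.Perm (Fin n)} (h : σ * iotaPerm n = iotaPerm n * σ) :
    permGL n F σ ∈ OJ n F := by
  show ((permGL n F σ : GL (Fin n) F) : Matrix (Fin n) (Fin n) F)ᵀ * Jmat n F *
      ((permGL n F σ : GL (Fin n) F) : Matrix (Fin n) (Fin n) F) = Jmat n F
  rw [permGL_coe, permMat_transpose]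
  ext i j
  rw [conj_perm_apply, Jmat_apply, Jmat_apply]
  congr 1
  simp only [eq_iff_iff]
  rw [eq_iota_iff (i := σ i) (j := σ j), eq_iota_iff (i := i) (j := j)]
  have hc : ∀ k, σ (iotaPerm n k) = iotaPerm n (σ k) := fun k => by
    have := congrArg (fun e : Equiv.Perm (Fin n) => e k) h
    simpa using this
  constructor
  · intro hh
    exact σ.injective (hh.trans (hc i).symm)
  · rintro rfl; exact hc i

end AuxLemmas
noncomputable section AuxLemmas2

open Matrix

variable (n : ℕ) (F : Type) [Field F]

/-- `(diagonal d)ᵀ J (diagonal d) = J` iff `d i * d (ι i) = 1` for all `i`. -/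
lemma diag_J_iff (d : Fin n → F) :
    (diagonal d)ᵀ * Jmat n F * diagonal d = Jmat n F ↔
      ∀ i, d i * d (iotaPerm n i) = 1 := by
  rw [Matrix.diagonal_transpose]
  constructor
  · intro h i
    have := congrFun (congrFun h i) (iotaPerm n i)
    rw [Matrix.mul_diagonal, Matrix.diagonal_mul, Jmat_iota] at this
    calc d i * d (iotaPerm n i) = d i * 1 * d (iotaPerm n i) := by ring
      _ = 1 := this
  · intro h
    ext i j
    rw [Matrix.mul_diagonal, Matrix.diagonal_mul, Jmat_apply]
    by_cases hij : (i : ℕ) + (j : ℕ) + 1 = n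
    · rw [if_pos hij]
      have hj : j = iotaPerm n i := eq_iota_iff.mp hij
      subst hj
      rw [mul_one]
      exact h i
    · rw [if_neg hij, mul_zero, zero_mul]

/-- Product of a `ι`-balanced family over `Fin (2l)` is 1. -/
lemma prod_eq_one_of_iota {l : ℕ} {n : ℕ} (hn : n = 2 * l) (d : Fin n → F)
    (h : ∀ i, d i * d (iotaPerm n i) = 1) : ∏ i, d i = 1 := by
  refine Finset.prod_ninvolution (g := fun i => iotaPerm n i) (fun i => h i)
    (fun i _ => iota_ne_self hn i) (fun i => Finset.mem_univ _) (fun i => iota_iota i)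

lemma d_ne_zero {d : Fin n → F} (h : ∀ i, d i * d (iotaPerm n i) = 1) (i : Fin n) : d i ≠ 0 :=
  left_ne_zero_of_mul_eq_one (h i)

/-- A diagonal matrix with nonzero entries, as an element of `GL_n(F)`. -/
def diagGL (d : Fin n → F) (hd : ∀ i, d i ≠ 0) : GL (Fin n) F :=
  ⟨diagonal d, diagonal (fun i => (d i)⁻¹),
    by rw [diagonal_mul_diagonal,
         show (fun i => d i * (d i)⁻¹) = fun _ : Fin n => (1 : F) from
           funext fun i => mul_inv_cancel₀ (hd i), Matrix.diagonal_one],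
    by rw [diagonal_mul_diagonal,
         show (fun i => (d i)⁻¹ * d i) = fun _ : Fin n => (1 : F) from
           funext fun i => inv_mul_cancel₀ (hd i), Matrix.diagonal_one]⟩

lemma diagGL_coe (d : Fin n → F) (hd : ∀ i, d i ≠ 0) :
    ((diagGL n F d hd : GL (Fin n) F) : Matrix (Fin n) (Fin n) F) = diagonal d := rfl

/-- `D ∈ T̄ ∩ SO_J` for balanced `d`. -/
lemma diagGL_mem {l : ℕ} {n : ℕ} (hn : n = 2 * l) (d : Fin n → F)
    (h : ∀ i, d i * d (iotaPerm n i) = 1) :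
    diagGL n F d (d_ne_zero n F h) ∈ Tbar n F ∧ diagGL n F d (d_ne_zero n F h) ∈ SOJ n F := by
  have hOJ : diagGL n F d (d_ne_zero n F h) ∈ OJ n F := by
    show _ * _ * _ = _
    rw [diagGL_coe]
    exact (diag_J_iff n F d).mpr h
  have hdet : ((diagGL n F d (d_ne_zero n F h) : GL (Fin n) F) :
      Matrix (Fin n) (Fin n) F).det = 1 := by
    rw [diagGL_coe, det_diagonal]
    exact prod_eq_one_of_iota F hn d h
  exact ⟨⟨hOJ, isDiag_diagonal d⟩, ⟨hOJ, hdet⟩⟩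

/-- An invertible matrix conjugating a diagonal matrix with distinct entries into a
diagonal matrix is monomial. -/
lemma monomial_of_conj {N : ℕ} {A B : Matrix (Fin N) (Fin N) F}
    (hAB : A * B = 1) (hBA : B * A = 1)
    {d d' : Fin N → F} (hd : Function.Injective d)
    (h : A * diagonal d = diagonal d' * A) :
    ∃ (σ : Equiv.Perm (Fin N)) (e : Fin N → F), A = diagonal e * permMat N F σ := by
  have key : ∀ i j, A i j ≠ 0 → d j = d' i := by
    intro i j hne
    have h1 := congrFun (congrFun h i) j
    rw [Matrix.mul_diagonal, Matrix.diagonal_mul] at h1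
    rw [mul_comm (d' i) (A i j)] at h1
    exact mul_left_cancel₀ hne (by rw [mul_comm (A i j) (d j), mul_comm (A i j) (d' i)] at h1 ⊢; exact h1)
  have rowne : ∀ i, ∃ j, A i j ≠ 0 := by
    intro i
    by_contra hc
    push_neg at hc
    have h1 : (A * B) i i = (1 : F) := by rw [hAB]; simp [Matrix.one_apply]
    rw [Matrix.mul_apply] at h1
    rw [Finset.sum_eq_zero (fun k _ => by rw [hc k, zero_mul])] at h1
    exact one_ne_zero h1.symm
  classical
  let g : Fin N → Fin N := fun i => (rowne i).choose
  have hg : ∀ i, A i (g i) ≠ 0 := fun i => (rowne i).choose_spec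
  have uniq : ∀ i j, A i j ≠ 0 → j = g i := by
    intro i j hne
    exact hd ((key i j hne).trans (key i (g i) (hg i)).symm)
  have gsurj : Function.Surjective g := by
    intro j
    by_contra hc
    push_neg at hc
    have hcol : ∀ i, A i j = 0 := by
      intro i
      by_contra hne
      exact hc i (uniq i j hne).symm
    have h1 : (B * A) j j = (1 : F) := by rw [hBA]; simp [Matrix.one_apply]
    rw [Matrix.mul_apply] at h1
    rw [Finset.sum_eq_zero (fun k _ => by rw [hcol k, mul_zero])] at h1
    exact one_ne_zero h1.symm
  have gbij : Function.Bijective g :=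
    ⟨Finite.injective_iff_surjective.mpr gsurj, gsurj⟩
  let γ : Equiv.Perm (Fin N) := Equiv.ofBijective g gbij
  refine ⟨γ⁻¹, fun i => A i (γ i), ?_⟩
  ext i j
  rw [Matrix.diagonal_mul, permMat_apply]
  by_cases hij : i = γ⁻¹ j
  · rw [if_pos hij, mul_one]
    have : j = γ i := by rw [hij]; simp
    rw [this]
  · rw [if_neg hij, mul_zero]
    by_contra hne
    have : j = g i := uniq i j hne
    exact hij (by
      have : j = γ i := this
      rw [this]; simp)

end AuxLemmas2
noncomputable section AuxLemmas3

open Matrix Polynomial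

variable (n : ℕ) (F : Type) [Field F]

/-- If a monomial matrix `diagonal e * P_σ` satisfies the `O_J` relation, then `σ` commutes
with `ι` and `e` is balanced. -/
lemma monomial_OJ {σ : Equiv.Perm (Fin n)} {e : Fin n → F}
    (h : (diagonal e * permMat n F σ)ᵀ * Jmat n F * (diagonal e * permMat n F σ) = Jmat n F) :
    σ * iotaPerm n = iotaPerm n * σ ∧ ∀ i, e i * e (iotaPerm n i) = 1 := by
  have hent : ∀ i, e (σ i) * (Jmat n F (σ i) (σ (iotaPerm n i)) * e (σ (iotaPerm n i))) = 1 := by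
    intro i
    have h1 := congrFun (congrFun h i) (iotaPerm n i)
    rw [Matrix.transpose_mul, Matrix.diagonal_transpose, permMat_transpose] at h1
    have h2 : permMat n F σ⁻¹ * diagonal e * Jmat n F * (diagonal e * permMat n F σ) =
        permMat n F σ⁻¹ * (diagonal e * Jmat n F * diagonal e) * permMat n F σ := by
      noncomm_ring
    rw [h2] at h1
    rw [conj_perm_apply, Jmat_iota] at h1
    rw [Matrix.mul_diagonal, Matrix.diagonal_mul] at h1
    rw [mul_assoc] at h1
    exact h1
  have hcommpt : ∀ i, σ (iotaPerm n i) = iotaPerm n (σ i) := by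
    intro i
    have h1 := hent i
    by_cases hc : ((σ i : Fin n) : ℕ) + ((σ (iotaPerm n i) : Fin n) : ℕ) + 1 = n
    · exact eq_iota_iff.mp hc
    · rw [Jmat_apply, if_neg hc, zero_mul, mul_zero] at h1
      exact absurd h1.symm one_ne_zero
  have hcomm : σ * iotaPerm n = iotaPerm n * σ := by
    apply Equiv.ext
    intro i
    simp only [Equiv.Perm.mul_apply]
    exact hcommpt i
  refine ⟨hcomm, fun k => ?_⟩
  have h1 := hent (σ⁻¹ k)
  rw [hcommpt (σ⁻¹ k)] at h1
  rw [show σ (σ⁻¹ k) = k from σ.apply_symm_apply k] at h1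
  rw [Jmat_iota, one_mul] at h1
  exact h1

/-- Existence of an injective balanced diagonal over an algebraically closed field of
characteristic `p`. -/
lemma exists_good_d (p : ℕ) [Fact p.Prime] [IsAlgClosed F] [CharP F p]
    (l : ℕ) (hl : 1 ≤ l) :
    ∃ d : Fin (2 * l) → F, Function.Injective d ∧
      ∀ i, d i * d (iotaPerm (2 * l) i) = 1 := by
  have hp2 : 2 ≤ p := (Fact.out : p.Prime).two_le
  set m : ℕ := 2 * l * p + 1 with hm
  have hml : 4 * l + 1 ≤ m := by
    have : 2 * l * 2 ≤ 2 * l * p := Nat.mul_le_mul_left _ hp2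
    omega
  have hm1 : 1 < m := by omega
  have hmF : (m : F) ≠ 0 := by
    have : ((m : ℕ) : F) = ((2 * l * p : ℕ) : F) + 1 := by rw [hm]; push_cast; ring
    rw [this]
    have hpz : ((p : ℕ) : F) = 0 := CharP.cast_eq_zero F p
    have : ((2 * l * p : ℕ) : F) = 0 := by push_cast [hpz]; ring
    rw [this, zero_add]
    exact one_ne_zero
  haveI : NeZero ((m : ℕ) : F) := ⟨hmF⟩
  -- get a primitive m-th root of unity
  obtain ⟨ζ, hζroot⟩ := IsAlgClosed.exists_root (cyclotomic m F) (by
    rw [degree_cyclotomic]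
    intro hdeg
    have := Nat.totient_pos.mpr (by omega : 0 < m)
    simp only [Nat.cast_eq_zero] at hdeg
    omega)
  have hζ : IsPrimitiveRoot ζ m := (isRoot_cyclotomic_iff).mp hζroot
  have hζ0 : ζ ≠ 0 := by
    intro hz
    have := hζ.pow_eq_one
    rw [hz, zero_pow (by omega : m ≠ 0)] at this
    exact zero_ne_one this
  have powinj : ∀ a b : ℕ, a < m → b < m → ζ ^ a = ζ ^ b → a = b := by
    have key : ∀ a b : ℕ, a ≤ b → b < m → ζ ^ a = ζ ^ b → a = b := by
      intro a b hab hbm hpow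
      have h1 : ζ ^ a * ζ ^ (b - a) = ζ ^ a * 1 := by
        rw [← pow_add, show a + (b - a) = b by omega, hpow, mul_one]
      have h2 : ζ ^ (b - a) = 1 := mul_left_cancel₀ (pow_ne_zero a hζ0) h1
      have hdvd := hζ.dvd_of_pow_eq_one _ h2
      rcases Nat.eq_zero_or_pos (b - a) with h0 | hpos
      · omega
      · exact absurd (Nat.le_of_dvd hpos hdvd) (by omega)
    intro a b ham hbm hpow
    rcases le_total a b with hab | hab
    · exact key a b hab hbm hpow
    · exact (key b a hab ham hpow.symm).symm
  -- exponent function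
  let E : Fin (2 * l) → ℕ := fun i => if (i : ℕ) < l then (i : ℕ) + 1 else m - (2 * l - (i : ℕ))
  have hE : ∀ i, E i < m := by
    intro i
    have hi := i.isLt
    simp only [E]
    split <;> omega
  have hEinj : ∀ i j : Fin (2 * l), E i = E j → i = j := by
    intro i j hij
    have hi := i.isLt; have hj := j.isLt
    apply Fin.ext
    simp only [E] at hij
    split at hij <;> split at hij <;> omega
  refine ⟨fun i => ζ ^ E i, ?_, ?_⟩
  · intro i j hij
    exact hEinj i j (powinj _ _ (hE i) (hE j) hij)
  · intro i
    have hi := i.isLt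
    rw [← pow_add]
    have : E i + E (iotaPerm (2 * l) i) = m := by
      have hcoe : ((iotaPerm (2 * l) i : Fin (2 * l)) : ℕ) = 2 * l - 1 - (i : ℕ) := iota_coe _ _
      simp only [E, hcoe]
      split <;> split <;> omega
    rw [this]
    exact hζ.pow_eq_one

end AuxLemmas3
noncomputable section AuxLemmas4

open Matrix

variable {n : ℕ} {F : Type} [Field F]

lemma mem_SOJ_parts (g : ↥(SOJ n F)) :
    (((g : GL (Fin n) F) : Matrix (Fin n) (Fin n) F)ᵀ * Jmat n F *
      ((g : GL (Fin n) F) : Matrix (Fin n) (Fin n) F) = Jmat n F) ∧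
    ((g : GL (Fin n) F) : Matrix (Fin n) (Fin n) F).det = 1 := by
  have hgSOJ : (g : GL (Fin n) F) ∈ OJ n F ⊓ SLgl n F := g.2
  rw [Subgroup.mem_inf] at hgSOJ
  exact ⟨hgSOJ.1, hgSOJ.2⟩

lemma conj_mem_Tad {w h : Had n F} (hw : w ∈ Wad n F) (ht : h ∈ Tad n F) :
    w * h * w⁻¹ ∈ Tad n F := by
  obtain ⟨ww, hww, rfl⟩ := Subgroup.mem_map.mp hw
  obtain ⟨tt, htt, rfl⟩ := Subgroup.mem_map.mp ht
  rw [← _root_.map_inv, ← _root_.map_mul, ← _root_.map_mul]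
  apply Subgroup.mem_map.mpr
  refine ⟨ww * tt * ww⁻¹, ?_, rfl⟩
  rw [Subgroup.mem_subgroupOf] at hww htt ⊢
  obtain ⟨⟨σ, hσcomm, hσ⟩, hwdet⟩ := hww
  obtain ⟨htOJ, htdiag⟩ := htt
  have hwGL : (ww : GL (Fin n) F) = permGL n F σ := Units.ext hσ
  have hwOJ : (ww : GL (Fin n) F) ∈ OJ n F := by
    rw [hwGL]; exact permGL_mem_OJ n F hσcomm
  have hcoe : ((ww * tt * ww⁻¹ : ↥(SOJ n F)) : GL (Fin n) F) =
      (ww : GL (Fin n) F) * (tt : GL (Fin n) F) * (ww : GL (Fin n) F)⁻¹ := by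
    push_cast; rfl
  constructor
  · rw [hcoe]
    exact mul_mem (mul_mem hwOJ htOJ) (inv_mem hwOJ)
  · have hmat : (((ww * tt * ww⁻¹ : ↥(SOJ n F)) : GL (Fin n) F) : Matrix (Fin n) (Fin n) F) =
        permMat n F σ * ((tt : GL (Fin n) F) : Matrix (Fin n) (Fin n) F) * permMat n F σ⁻¹ := by
      rw [hcoe, hwGL]
      rw [Units.val_mul, Units.val_mul, permGL_coe, permGL_inv_coe]
    rw [hmat, ← htdiag.diagonal_diag, permMat_mul_diagonal, mul_assoc, permMat_mul,
      mul_inv_cancel, permMat_one, mul_one]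
    exact isDiag_diagonal _

lemma Wad_le_normalizer : Wad n F ≤ Subgroup.normalizer (Tad n F : Set (Had n F)) := by
  intro w hw
  rw [Subgroup.mem_normalizer_iff]
  intro h
  constructor
  · exact fun hh => conj_mem_Tad hw hh
  · intro hh
    have h2 := conj_mem_Tad (inv_mem hw) hh
    have e : w⁻¹ * (w * h * w⁻¹) * w⁻¹⁻¹ = h := by group
    rwa [e] at h2

lemma Tad_inf_Wad : Tad n F ⊓ Wad n F = ⊥ := by
  apply (Subgroup.eq_bot_iff_forall _).mpr
  rintro x ⟨hxT, hxW⟩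
  obtain ⟨tt, htt, hπt⟩ := Subgroup.mem_map.mp hxT
  obtain ⟨ww, hww, hπw⟩ := Subgroup.mem_map.mp hxW
  rw [Subgroup.mem_subgroupOf] at htt hww
  obtain ⟨htOJ, htdiag⟩ := htt
  obtain ⟨⟨σ, hσcomm, hσ⟩, hwdet⟩ := hww
  have hππ : piAd n F tt = piAd n F ww := hπt.trans hπw.symm
  obtain ⟨z, hz, hzeq⟩ := (QuotientGroup.mk'_eq_mk' (Zpm n F)).mp hππ
  have hmateq : (((ww : GL (Fin n) F)) : Matrix (Fin n) (Fin n) F) =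
      ((tt : GL (Fin n) F) : Matrix (Fin n) (Fin n) F) *
        ((z : GL (Fin n) F) : Matrix (Fin n) (Fin n) F) := by
    have := congrArg (fun y : ↥(SOJ n F) => (((y : GL (Fin n) F)) : Matrix (Fin n) (Fin n) F)) hzeq
    simpa using this.symm
  have hσ1 : σ = 1 := by
    by_contra hne
    obtain ⟨j, hj⟩ : ∃ j, σ j ≠ j := by
      by_contra hc; push_neg at hc
      exact hne (Equiv.ext fun i => hc i)
    have h0 : ((tt : GL (Fin n) F) : Matrix (Fin n) (Fin n) F) (σ j) j = 0 := htdiag hj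
    have h1 : ((ww : GL (Fin n) F) : Matrix (Fin n) (Fin n) F) (σ j) j = 1 := by
      rw [hσ, permMat_apply, if_pos rfl]
    rcases hz with hz1 | hz1
    · rw [hmateq, hz1] at h1
      simp only [Units.val_one, mul_one] at h1
      rw [h0] at h1
      exact one_ne_zero h1.symm
    · rw [hmateq, hz1] at h1
      simp only [Units.val_neg, Units.val_one, mul_neg, mul_one] at h1
      rw [Matrix.neg_apply, h0] at h1
      simp at h1
  have hww1 : ww = 1 := by
    apply Subtype.ext
    apply Units.ext
    rw [hσ, hσ1, permMat_one]
    rfl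
  rw [← hπw, hww1, _root_.map_one]

lemma decomp_normalizer (l : ℕ) (hl : 1 ≤ l) (p : ℕ) [Fact p.Prime]
    [IsAlgClosed F] [CharP F p] :
    ∀ x ∈ Subgroup.normalizer (Tad (2 * l) F : Set (Had (2 * l) F)),
      ∃ t ∈ Tad (2 * l) F, ∃ w ∈ Wad (2 * l) F, x = t * w := by
  intro x hx
  obtain ⟨g, hg⟩ := QuotientGroup.mk'_surjective (Zpm (2 * l) F) x
  have hg' : x = piAd (2 * l) F g := hg.symm
  subst hg'
  obtain ⟨d, hdinj, hdbal⟩ := exists_good_d F p l hl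
  have hd0 := d_ne_zero (2 * l) F hdbal
  obtain ⟨htT, htSO⟩ := diagGL_mem (F := F) (l := l) rfl d hdbal
  set tGL := diagGL (2 * l) F d hd0 with htGL
  set tSO : ↥(SOJ (2 * l) F) := ⟨tGL, htSO⟩ with htSOdef
  have htad : piAd (2 * l) F tSO ∈ Tad (2 * l) F :=
    Subgroup.mem_map.mpr ⟨tSO, Subgroup.mem_subgroupOf.mpr htT, rfl⟩
  have hconj := (Subgroup.mem_normalizer_iff.mp hx _).mp htad
  have hrw : piAd (2 * l) F g * piAd (2 * l) F tSO * (piAd (2 * l) F g)⁻¹ =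
      piAd (2 * l) F (g * tSO * g⁻¹) := by rw [_root_.map_mul, _root_.map_mul, _root_.map_inv]
  rw [hrw] at hconj
  obtain ⟨s, hsT, hπs⟩ := Subgroup.mem_map.mp hconj
  rw [Subgroup.mem_subgroupOf] at hsT
  obtain ⟨hsOJ, hsdiag⟩ := hsT
  obtain ⟨z, hz, hsz⟩ := (QuotientGroup.mk'_eq_mk' (Zpm (2 * l) F)).mp hπs
  -- matrix-level equation:  s z g = g t
  set A : Matrix (Fin (2 * l)) (Fin (2 * l)) F := ((g : GL (Fin (2 * l)) F) : Matrix (Fin (2 * l)) (Fin (2 * l)) F) with hA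
  have hGLeq : (s : GL (Fin (2 * l)) F) * (z : GL (Fin (2 * l)) F) * (g : GL (Fin (2 * l)) F)
      = (g : GL (Fin (2 * l)) F) * tGL := by
    have h1 : ((s * z : ↥(SOJ (2 * l) F)) : GL (Fin (2 * l)) F) =
        ((g * tSO * g⁻¹ : ↥(SOJ (2 * l) F)) : GL (Fin (2 * l)) F) := by rw [hsz]
    push_cast at h1
    calc (s : GL (Fin (2 * l)) F) * (z : GL (Fin (2 * l)) F) * (g : GL (Fin (2 * l)) F)
        = ((g : GL (Fin (2 * l)) F) * tGL * (g : GL (Fin (2 * l)) F)⁻¹) *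
            (g : GL (Fin (2 * l)) F) := by rw [← h1]
      _ = (g : GL (Fin (2 * l)) F) * tGL := by group
  -- identify s z with a diagonal matrix
  set ds : Fin (2 * l) → F := Matrix.diag ((s : GL (Fin (2 * l)) F) : Matrix (Fin (2 * l)) (Fin (2 * l)) F) with hds
  have hsM : ((s : GL (Fin (2 * l)) F) : Matrix (Fin (2 * l)) (Fin (2 * l)) F)
      = diagonal ds := hsdiag.diagonal_diag.symm
  have hdiagfact : ∃ d' : Fin (2 * l) → F, A * diagonal d = diagonal d' * A := by
    have hmat := congrArg (fun u : GL (Fin (2 * l)) F => (u : Matrix (Fin (2 * l)) (Fin (2 * l)) F)) hGLeq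
    simp only [Units.val_mul] at hmat
    have htval : (tGL : Matrix (Fin (2 * l)) (Fin (2 * l)) F) = diagonal d := rfl
    rcases hz with hz1 | hz1
    · refine ⟨ds, ?_⟩
      rw [hz1] at hmat
      simp only [Units.val_one, mul_one] at hmat
      rw [hsM, htval] at hmat
      exact hmat.symm
    · refine ⟨fun i => -(ds i), ?_⟩
      rw [hz1] at hmat
      simp only [Units.val_neg, Units.val_one, mul_neg, mul_one, neg_mul] at hmat
      rw [hsM, htval] at hmat
      have : diagonal (fun i => -(ds i)) = -(diagonal ds) := by
        rw [Matrix.diagonal_neg]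
      rw [this, neg_mul, ← hmat]
  obtain ⟨d', hconjmat⟩ := hdiagfact
  -- monomial decomposition
  have hAB : A * (((g : GL (Fin (2 * l)) F)⁻¹ : GL (Fin (2 * l)) F) : Matrix (Fin (2 * l)) (Fin (2 * l)) F) = 1 := by
    rw [hA, ← Units.val_mul, mul_inv_cancel, Units.val_one]
  have hBA : (((g : GL (Fin (2 * l)) F)⁻¹ : GL (Fin (2 * l)) F) : Matrix (Fin (2 * l)) (Fin (2 * l)) F) * A = 1 := by
    rw [hA, ← Units.val_mul, inv_mul_cancel, Units.val_one]
  obtain ⟨σ, e, hAfact⟩ := monomial_of_conj F hAB hBA hdinj hconjmat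
  -- O_J conditions
  have hgOJ : Aᵀ * Jmat (2 * l) F * A = Jmat (2 * l) F := (mem_SOJ_parts g).1
  rw [hAfact] at hgOJ
  obtain ⟨hσcomm, hebal⟩ := monomial_OJ (2 * l) F hgOJ
  have he0 := d_ne_zero (2 * l) F hebal
  obtain ⟨heT, heSO⟩ := diagGL_mem (F := F) (l := l) rfl e hebal
  -- determinant of the permutation part
  have hgdet : A.det = 1 := (mem_SOJ_parts g).2
  have hedet : (diagonal e).det = 1 := by
    rw [det_diagonal]; exact prod_eq_one_of_iota F rfl e hebal
  have hPdet : (permMat (2 * l) F σ).det = 1 := by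
    rw [hAfact, det_mul, hedet, one_mul] at hgdet
    exact hgdet
  have hwSO : permGL (2 * l) F σ ∈ SOJ (2 * l) F :=
    ⟨permGL_mem_OJ (2 * l) F hσcomm, hPdet⟩
  have hwW : permGL (2 * l) F σ ∈ Wbar (2 * l) F :=
    ⟨⟨σ, hσcomm, rfl⟩, hPdet⟩
  set tSO' : ↥(SOJ (2 * l) F) := ⟨diagGL (2 * l) F e he0, heSO⟩ with htSO'
  set wSO' : ↥(SOJ (2 * l) F) := ⟨permGL (2 * l) F σ, hwSO⟩ with hwSO'
  have hgfact : g = tSO' * wSO' := by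
    apply Subtype.ext
    apply Units.ext
    push_cast
    show A = _
    rw [hAfact]
    rfl
  refine ⟨piAd (2 * l) F tSO',
    Subgroup.mem_map.mpr ⟨tSO', Subgroup.mem_subgroupOf.mpr heT, rfl⟩,
    piAd (2 * l) F wSO',
    Subgroup.mem_map.mpr ⟨wSO', Subgroup.mem_subgroupOf.mpr hwW, rfl⟩, ?_⟩
  rw [hgfact, _root_.map_mul]

end AuxLemmas4
noncomputable section AuxLemmas5

open Matrix

variable {n : ℕ} {F : Type} [Field F]

lemma mem_SOJ_of (g : GL (Fin n) F)
    (h1 : ((g : Matrix (Fin n) (Fin n) F))ᵀ * Jmat n F * (g : Matrix (Fin n) (Fin n) F) =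
      Jmat n F)
    (h2 : ((g : Matrix (Fin n) (Fin n) F)).det = 1) : g ∈ SOJ n F := by
  have : g ∈ OJ n F ⊓ SLgl n F := Subgroup.mem_inf.mpr ⟨h1, h2⟩
  exact this

lemma mem_OJ_of_mem_SOJ {g : GL (Fin n) F} (h : g ∈ SOJ n F) : g ∈ OJ n F := by
  have h' : g ∈ OJ n F ⊓ SLgl n F := h
  exact (Subgroup.mem_inf.mp h').1

lemma det_of_mem_SOJ {g : GL (Fin n) F} (h : g ∈ SOJ n F) :
    ((g : Matrix (Fin n) (Fin n) F)).det = 1 := by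
  have h' : g ∈ OJ n F ⊓ SLgl n F := h
  exact (Subgroup.mem_inf.mp h').2

-- Frobenius facts
lemma frobGL_coe (p : ℕ) [Fact p.Prime] [CharP F p] (g : GL (Fin n) F) :
    ((frobGL n F p g : GL (Fin n) F) : Matrix (Fin n) (Fin n) F) =
      ((g : Matrix (Fin n) (Fin n) F)).map (frobenius F p) := rfl

lemma Jmat_map_frob (p : ℕ) [Fact p.Prime] [CharP F p] :
    (Jmat n F).map (frobenius F p) = Jmat n F := by
  ext i j
  rw [Matrix.map_apply, Jmat_apply]
  by_cases h : (i : ℕ) + (j : ℕ) + 1 = n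
  · rw [if_pos h, _root_.map_one]
  · rw [if_neg h, map_zero]

lemma OJ_eq_of_mem {g : GL (Fin n) F} (h : g ∈ OJ n F) :
    ((g : Matrix (Fin n) (Fin n) F))ᵀ * Jmat n F * (g : Matrix (Fin n) (Fin n) F) =
      Jmat n F := h

lemma frob_mem_SOJ (p : ℕ) [Fact p.Prime] [CharP F p] {g : GL (Fin n) F}
    (hg : g ∈ SOJ n F) : frobGL n F p g ∈ SOJ n F := by
  apply mem_SOJ_of
  · rw [frobGL_coe, ← Matrix.transpose_map]
    rw [← Jmat_map_frob (n := n) (F := F) p, ← Matrix.map_mul, ← Matrix.map_mul,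
      OJ_eq_of_mem (mem_OJ_of_mem_SOJ hg)]
  · rw [frobGL_coe, ← RingHom.mapMatrix_apply, ← RingHom.map_det,
      det_of_mem_SOJ hg, _root_.map_one]

lemma permMat_map_frob (p : ℕ) [Fact p.Prime] [CharP F p] (σ : Equiv.Perm (Fin n)) :
    (permMat n F σ).map (frobenius F p) = permMat n F σ := by
  ext i j
  rw [Matrix.map_apply, permMat_apply]
  by_cases h : i = σ j
  · rw [if_pos h, _root_.map_one]
  · rw [if_neg h, map_zero]

-- conjugation facts
lemma conj_mem_SOJ {c g : GL (Fin n) F} (hc : c ∈ OJ n F) (hg : g ∈ SOJ n F) :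
    c * g * c⁻¹ ∈ SOJ n F := by
  apply mem_SOJ_of
  · have hOJ : c * g * c⁻¹ ∈ OJ n F :=
      mul_mem (mul_mem hc (mem_OJ_of_mem_SOJ hg)) (inv_mem hc)
    exact hOJ
  · have h1 : ((c * g * c⁻¹ : GL (Fin n) F) : Matrix (Fin n) (Fin n) F) =
        (c : Matrix (Fin n) (Fin n) F) * (g : Matrix (Fin n) (Fin n) F) *
          ((c⁻¹ : GL (Fin n) F) : Matrix (Fin n) (Fin n) F) := by
      rw [Units.val_mul, Units.val_mul]
    rw [h1, det_mul, det_mul]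
    have h2 : ((c : Matrix (Fin n) (Fin n) F)).det *
        (((c⁻¹ : GL (Fin n) F) : Matrix (Fin n) (Fin n) F)).det = 1 := by
      rw [← det_mul, ← Units.val_mul, mul_inv_cancel, Units.val_one, det_one]
    calc ((c : Matrix (Fin n) (Fin n) F)).det * ((g : Matrix (Fin n) (Fin n) F)).det *
          (((c⁻¹ : GL (Fin n) F) : Matrix (Fin n) (Fin n) F)).det
        = ((c : Matrix (Fin n) (Fin n) F)).det *
            (((c⁻¹ : GL (Fin n) F) : Matrix (Fin n) (Fin n) F)).det *
            ((g : Matrix (Fin n) (Fin n) F)).det := by ring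
      _ = 1 := by rw [h2, det_of_mem_SOJ hg, one_mul]

/-- Conjugating an element of `W̄ ∩ SO_J` by a commuting permutation matrix stays in
`W̄ ∩ SO_J`. -/
lemma conj_Wbar_mem {τ : Equiv.Perm (Fin n)} (hτ : τ * iotaPerm n = iotaPerm n * τ)
    {x : GL (Fin n) F} (hx : x ∈ Wbar n F) (hxSO : x ∈ SOJ n F) :
    permGL n F τ * x * (permGL n F τ)⁻¹ ∈ Wbar n F ∧
      permGL n F τ * x * (permGL n F τ)⁻¹ ∈ SOJ n F := by
  obtain ⟨⟨σ, hσ, hxval⟩, hxdet⟩ := hx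
  have hSO : permGL n F τ * x * (permGL n F τ)⁻¹ ∈ SOJ n F :=
    conj_mem_SOJ (permGL_mem_OJ n F hτ) hxSO
  refine ⟨⟨⟨τ * σ * τ⁻¹, ?_, ?_⟩, det_of_mem_SOJ hSO⟩, hSO⟩
  · have cτ : Commute τ (iotaPerm n) := hτ
    have cσ : Commute σ (iotaPerm n) := hσ
    exact ((cτ.mul_left cσ).mul_left cτ.inv_left : Commute (τ * σ * τ⁻¹) (iotaPerm n))
  · rw [Units.val_mul, Units.val_mul, permGL_coe, permGL_inv_coe, hxval,
      permMat_mul, permMat_mul]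

end AuxLemmas5
noncomputable section AuxLemmas6

open Matrix

lemma swap_comm_iota {l : ℕ} (hl : 1 ≤ l) (A B : Fin (2 * l))
    (hA : (A : ℕ) = l - 1) (hB : (B : ℕ) = l) :
    Equiv.swap A B * iotaPerm (2 * l) = iotaPerm (2 * l) * Equiv.swap A B := by
  have hιA : iotaPerm (2 * l) A = B := by
    apply Fin.ext; rw [iota_coe, hA, hB]; omega
  have hιB : iotaPerm (2 * l) B = A := by
    apply Fin.ext; rw [iota_coe, hA, hB]; omega
  apply Equiv.ext
  intro i
  simp only [Equiv.Perm.mul_apply]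
  rcases eq_or_ne i A with rfl | hiA
  · rw [hιA, Equiv.swap_apply_right, Equiv.swap_apply_left, hιB]
  · rcases eq_or_ne i B with rfl | hiB
    · rw [hιB, Equiv.swap_apply_left, Equiv.swap_apply_right, hιA]
    · have h1 : iotaPerm (2 * l) i ≠ A := by
        intro h
        apply hiB
        have := congrArg (iotaPerm (2 * l)) h
        rw [iota_iota, hιA] at this
        exact this
      have h2 : iotaPerm (2 * l) i ≠ B := by
        intro h
        apply hiA
        have := congrArg (iotaPerm (2 * l)) h
        rw [iota_iota, hιB] at this
        exact this
      rw [Equiv.swap_apply_of_ne_of_ne h1 h2, Equiv.swap_apply_of_ne_of_ne hiA hiB]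

end AuxLemmas6

set_option maxHeartbeats 2000000

/-- For `p` an odd prime, `F` algebraically closed of characteristic `p`,
`l ≥ 4`, `H := SO_J/{±I}`, `T := π(T̄)` and `W̌ := π(W̄)`:
(1) `N_H(T)` is the internal semidirect product of `T` by `W̌`;
(2) the entrywise Frobenius preserves `SO_J` and `Z = {±I}` and the induced endomorphism of `H`
fixes every element of `W̌`;
(3) with `c` the permutation matrix of the transposition `(l, l+1)`, one has `c ∈ O_J`,
conjugation by `c` preserves `SO_J` and `Z`, and the induced automorphism of `H`
maps `W̌` onto `W̌`. -/
theorem adjoint_normalizer_semidirect_frobenius_and_graph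
    (p : ℕ) [Fact p.Prime] (hp2 : p ≠ 2)
    (F : Type) [Field F] [IsAlgClosed F] [CharP F p]
    (l : ℕ) (hl : 4 ≤ l) :
    -- (1)
    (Wad (2 * l) F ≤ Subgroup.normalizer (Tad (2 * l) F : Set (Had (2 * l) F)) ∧
      Tad (2 * l) F ⊓ Wad (2 * l) F = ⊥ ∧
      ∀ x ∈ Subgroup.normalizer (Tad (2 * l) F : Set (Had (2 * l) F)),
        ∃ t ∈ Tad (2 * l) F, ∃ w ∈ Wad (2 * l) F, x = t * w) ∧
    -- (2)
    ((∀ g : GL (Fin (2 * l)) F, g ∈ SOJ (2 * l) F → frobGL (2 * l) F p g ∈ SOJ (2 * l) F) ∧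
      (∀ z : ↥(SOJ (2 * l) F), z ∈ Zpm (2 * l) F →
        ∀ h : frobGL (2 * l) F p (z : GL (Fin (2 * l)) F) ∈ SOJ (2 * l) F,
          (⟨frobGL (2 * l) F p (z : GL (Fin (2 * l)) F), h⟩ : ↥(SOJ (2 * l) F)) ∈ Zpm (2 * l) F) ∧
      (∀ g : ↥(SOJ (2 * l) F), g ∈ (Wbar (2 * l) F).subgroupOf (SOJ (2 * l) F) →
        ∃ h : frobGL (2 * l) F p (g : GL (Fin (2 * l)) F) ∈ SOJ (2 * l) F,
          piAd (2 * l) F (⟨frobGL (2 * l) F p (g : GL (Fin (2 * l)) F), h⟩ : ↥(SOJ (2 * l) F)) =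
            piAd (2 * l) F g)) ∧
    -- (3)
    (permGL (2 * l) F (Equiv.swap (⟨l - 1, by omega⟩ : Fin (2 * l)) ⟨l, by omega⟩) ∈ OJ (2 * l) F ∧
      (∀ g : GL (Fin (2 * l)) F, g ∈ SOJ (2 * l) F →
        permGL (2 * l) F (Equiv.swap (⟨l - 1, by omega⟩ : Fin (2 * l)) ⟨l, by omega⟩) * g *
          (permGL (2 * l) F (Equiv.swap (⟨l - 1, by omega⟩ : Fin (2 * l)) ⟨l, by omega⟩))⁻¹ ∈
          SOJ (2 * l) F) ∧
      (∀ z : ↥(SOJ (2 * l) F), z ∈ Zpm (2 * l) F →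
        ∀ h : permGL (2 * l) F (Equiv.swap (⟨l - 1, by omega⟩ : Fin (2 * l)) ⟨l, by omega⟩) *
            (z : GL (Fin (2 * l)) F) *
            (permGL (2 * l) F (Equiv.swap (⟨l - 1, by omega⟩ : Fin (2 * l)) ⟨l, by omega⟩))⁻¹ ∈
            SOJ (2 * l) F,
          (⟨_, h⟩ : ↥(SOJ (2 * l) F)) ∈ Zpm (2 * l) F) ∧
      (∀ g : ↥(SOJ (2 * l) F), g ∈ (Wbar (2 * l) F).subgroupOf (SOJ (2 * l) F) →
        ∃ h : permGL (2 * l) F (Equiv.swap (⟨l - 1, by omega⟩ : Fin (2 * l)) ⟨l, by omega⟩) *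
            (g : GL (Fin (2 * l)) F) *
            (permGL (2 * l) F (Equiv.swap (⟨l - 1, by omega⟩ : Fin (2 * l)) ⟨l, by omega⟩))⁻¹ ∈
            SOJ (2 * l) F,
          piAd (2 * l) F (⟨_, h⟩ : ↥(SOJ (2 * l) F)) ∈ Wad (2 * l) F) ∧
      (∀ w ∈ Wad (2 * l) F, ∃ g : ↥(SOJ (2 * l) F),
        g ∈ (Wbar (2 * l) F).subgroupOf (SOJ (2 * l) F) ∧
        ∃ h : permGL (2 * l) F (Equiv.swap (⟨l - 1, by omega⟩ : Fin (2 * l)) ⟨l, by omega⟩) *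
            (g : GL (Fin (2 * l)) F) *
            (permGL (2 * l) F (Equiv.swap (⟨l - 1, by omega⟩ : Fin (2 * l)) ⟨l, by omega⟩))⁻¹ ∈
            SOJ (2 * l) F,
          piAd (2 * l) F (⟨_, h⟩ : ↥(SOJ (2 * l) F)) = w)) := by
  have hl1 : 1 ≤ l := by omega
  -- the swap and its commutation with ι
  have hτ : (Equiv.swap (⟨l - 1, by omega⟩ : Fin (2 * l)) ⟨l, by omega⟩) * iotaPerm (2 * l) =
      iotaPerm (2 * l) * Equiv.swap (⟨l - 1, by omega⟩ : Fin (2 * l)) ⟨l, by omega⟩ :=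
    swap_comm_iota hl1 _ _ rfl rfl
  have hcOJ : permGL (2 * l) F (Equiv.swap (⟨l - 1, by omega⟩ : Fin (2 * l)) ⟨l, by omega⟩)
      ∈ OJ (2 * l) F := permGL_mem_OJ (2 * l) F hτ
  refine ⟨⟨Wad_le_normalizer, Tad_inf_Wad, decomp_normalizer l hl1 p⟩, ⟨?_, ?_, ?_⟩,
    ⟨hcOJ, ?_, ?_, ?_, ?_⟩⟩
  -- (2a) Frobenius preserves SO_J
  · intro g hg
    exact frob_mem_SOJ p hg
  -- (2b) Frobenius preserves Z
  · intro z hz h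
    rcases hz with hz1 | hz1
    · left
      show frobGL (2 * l) F p (z : GL (Fin (2 * l)) F) = 1
      rw [hz1, _root_.map_one]
    · right
      show frobGL (2 * l) F p (z : GL (Fin (2 * l)) F) = -1
      rw [hz1]
      apply Units.ext
      rw [frobGL_coe, Units.val_neg, Units.val_one, ← RingHom.mapMatrix_apply,
        _root_.map_neg, _root_.map_one]
  -- (2c) Frobenius fixes W̌
  · intro g hg
    rw [Subgroup.mem_subgroupOf] at hg
    obtain ⟨⟨σ, hσ, hval⟩, hdet⟩ := hg
    have hfix : frobGL (2 * l) F p (g : GL (Fin (2 * l)) F) = (g : GL (Fin (2 * l)) F) :=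
      Units.ext (by rw [frobGL_coe, hval, permMat_map_frob])
    refine ⟨by rw [hfix]; exact g.2, ?_⟩
    exact congrArg (piAd (2 * l) F) (Subtype.ext hfix)
  -- (3b) conjugation preserves SO_J
  · intro g hg
    exact conj_mem_SOJ hcOJ hg
  -- (3c) conjugation preserves Z
  · intro z hz h
    rcases hz with hz1 | hz1
    · left
      show _ * (z : GL (Fin (2 * l)) F) * _ = 1
      rw [hz1, mul_one, mul_inv_cancel]
    · right
      show _ * (z : GL (Fin (2 * l)) F) * _ = -1
      rw [hz1, mul_neg_one, neg_mul, mul_inv_cancel]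
  -- (3d) conjugation maps W̌ into W̌
  · intro g hg
    rw [Subgroup.mem_subgroupOf] at hg
    obtain ⟨hW, hSO⟩ := conj_Wbar_mem hτ hg g.2
    refine ⟨hSO, ?_⟩
    exact Subgroup.mem_map.mpr ⟨⟨_, hSO⟩, Subgroup.mem_subgroupOf.mpr hW, rfl⟩
  -- (3e) conjugation maps W̌ onto W̌
  · intro w hw
    obtain ⟨g₀, hg₀, hπ⟩ := Subgroup.mem_map.mp hw
    rw [Subgroup.mem_subgroupOf] at hg₀
    have hτinv : (Equiv.swap (⟨l - 1, by omega⟩ : Fin (2 * l)) ⟨l, by omega⟩)⁻¹ *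
        iotaPerm (2 * l) = iotaPerm (2 * l) *
        (Equiv.swap (⟨l - 1, by omega⟩ : Fin (2 * l)) ⟨l, by omega⟩)⁻¹ := by
      have hcomm : Commute (Equiv.swap (⟨l - 1, by omega⟩ : Fin (2 * l)) ⟨l, by omega⟩)
          (iotaPerm (2 * l)) := hτ
      exact hcomm.inv_left
    obtain ⟨hW', hSO'⟩ := conj_Wbar_mem hτinv hg₀ g₀.2
    have hcinv : (permGL (2 * l) F
          (Equiv.swap (⟨l - 1, by omega⟩ : Fin (2 * l)) ⟨l, by omega⟩))⁻¹ =
        permGL (2 * l) F (Equiv.swap (⟨l - 1, by omega⟩ : Fin (2 * l)) ⟨l, by omega⟩)⁻¹ :=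
      Units.ext (permGL_inv_coe (2 * l) F _)
    set c := permGL (2 * l) F (Equiv.swap (⟨l - 1, by omega⟩ : Fin (2 * l)) ⟨l, by omega⟩)
      with hc
    set y := permGL (2 * l) F (Equiv.swap (⟨l - 1, by omega⟩ : Fin (2 * l)) ⟨l, by omega⟩)⁻¹ *
        (g₀ : GL (Fin (2 * l)) F) *
        (permGL (2 * l) F (Equiv.swap (⟨l - 1, by omega⟩ : Fin (2 * l)) ⟨l, by omega⟩)⁻¹)⁻¹
      with hy
    have hre : c * y * c⁻¹ = (g₀ : GL (Fin (2 * l)) F) := by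
      rw [hy, ← hcinv]
      group
    refine ⟨⟨y, hSO'⟩, Subgroup.mem_subgroupOf.mpr hW', by rw [hre]; exact g₀.2, ?_⟩
    have : (⟨c * y * c⁻¹, by rw [hre]; exact g₀.2⟩ : ↥(SOJ (2 * l) F)) = g₀ :=
      Subtype.ext hre
    rw [this]
    exact hπ
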